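/- arXiv:1805.07530 — 5 statements merged into one kernel-verified Lean document; each statement's English description precedes it below -/
import Mathlib

section
/- Let σ₀ = (1,3,2)(4,7,5) and σ₁ = (3,4)(5,6) be permutations of {1,...,7}. Then the subgroup of S₇ generated by σ₀ and σ₁ is isomorphic to GL₃(𝔽₂). -/
namespace MonodromyAux
open Matrix

abbrev F := ZMod 2

/-- enumeration of the nonzero vectors of `F₂³`. -/
def v : Fin 7 → (Fin 3 → F) :=
  ![![0,0,1], ![0,1,0], ![1,0,0], ![1,1,0], ![1,0,1], ![1,1,1], ![0,1,1]]

def idx (x : Fin 3 → F) : Fin 7 :=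
  if x = v 1 then 1 else if x = v 2 then 2 else if x = v 3 then 3 else
  if x = v 4 then 4 else if x = v 5 then 5 else if x = v 6 then 6 else 0

lemma idx_v : ∀ i, idx (v i) = i := by decide

lemma v_idx : ∀ x : Fin 3 → F, x ≠ 0 → v (idx x) = x := by decide

lemma v_ne_zero : ∀ i, v i ≠ 0 := by decide

lemma mulVec_v_ne_zero (A : GL (Fin 3) F) (i : Fin 7) : (A : Matrix (Fin 3) (Fin 3) F) *ᵥ v i ≠ 0 := by
  intro h
  apply v_ne_zero i
  calc v i = ((↑A⁻¹ : Matrix (Fin 3) (Fin 3) F) * (A : Matrix (Fin 3) (Fin 3) F)) *ᵥ v i := by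
        rw [Units.inv_mul, Matrix.one_mulVec]
    _ = (↑A⁻¹ : Matrix (Fin 3) (Fin 3) F) *ᵥ ((A : Matrix (Fin 3) (Fin 3) F) *ᵥ v i) :=
        (Matrix.mulVec_mulVec _ _ _).symm
    _ = 0 := by rw [h, Matrix.mulVec_zero]

/-- the permutation of the nonzero vectors induced by an invertible matrix. -/
def pm (A : GL (Fin 3) F) : Equiv.Perm (Fin 7) where
  toFun i := idx ((A : Matrix (Fin 3) (Fin 3) F) *ᵥ v i)
  invFun i := idx ((↑A⁻¹ : Matrix (Fin 3) (Fin 3) F) *ᵥ v i)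
  left_inv i := by
    dsimp only
    rw [v_idx _ (mulVec_v_ne_zero A i), Matrix.mulVec_mulVec, Units.inv_mul,
      Matrix.one_mulVec, idx_v]
  right_inv i := by
    dsimp only
    rw [v_idx _ (mulVec_v_ne_zero A⁻¹ i), Matrix.mulVec_mulVec]
    rw [show ((A : Matrix (Fin 3) (Fin 3) F) * (↑A⁻¹ : Matrix (Fin 3) (Fin 3) F)) = 1 from
      Units.mul_inv A, Matrix.one_mulVec, idx_v]

def e : GL (Fin 3) F →* Equiv.Perm (Fin 7) where
  toFun := pm
  map_one' := by
    ext i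
    simp [pm, Matrix.one_mulVec, idx_v]
  map_mul' A B := by
    ext i
    simp only [pm, Equiv.coe_fn_mk, Equiv.Perm.coe_mul, Function.comp_apply]
    rw [v_idx _ (mulVec_v_ne_zero B i), Matrix.mulVec_mulVec]
    rfl

lemma e_injective : Function.Injective e := by
  rw [injective_iff_map_eq_one]
  intro A hA
  have key : ∀ x : Fin 3 → F, (A : Matrix (Fin 3) (Fin 3) F) *ᵥ x = x := by
    intro x
    rcases eq_or_ne x 0 with rfl | hx
    · simp
    · have h1 : idx ((A : Matrix (Fin 3) (Fin 3) F) *ᵥ v (idx x)) = idx x := by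
        have := Equiv.ext_iff.mp hA (idx x)
        simpa [e, pm] using this
      have h2 : (A : Matrix (Fin 3) (Fin 3) F) *ᵥ v (idx x) =
          v (idx ((A : Matrix (Fin 3) (Fin 3) F) *ᵥ v (idx x))) :=
        (v_idx _ (mulVec_v_ne_zero A (idx x))).symm
      rw [h1, v_idx x hx] at h2
      exact h2
  ext i j
  have := congrFun (key (Pi.single j 1)) i
  simpa [Matrix.mulVec_single, Matrix.one_apply, Pi.single_apply, eq_comm] using this

def M0 : GL (Fin 3) F :=
  ⟨!![0,0,1; 1,0,0; 0,1,0], !![0,1,0; 0,0,1; 1,0,0], by decide, by decide⟩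

def M1 : GL (Fin 3) F :=
  ⟨!![1,0,0; 1,1,0; 0,0,1], !![1,0,0; 1,1,0; 0,0,1], by decide, by decide⟩

def S : Subgroup (GL (Fin 3) F) := Subgroup.closure {M0, M1}

lemma hM0 : M0 ∈ S := Subgroup.subset_closure (by simp)
lemma hM1 : M1 ∈ S := Subgroup.subset_closure (by simp)

lemma diag_eq_one : ∀ D : Fin 3 → F, Matrix.det (Matrix.diagonal D) ≠ 0 →
    Matrix.diagonal D = (1 : Matrix (Fin 3) (Fin 3) F) := by decide

set_option maxHeartbeats 1000000 in
lemma transvec_mem (i j : Fin 3) (hij : i ≠ j) :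
    ∃ g ∈ S, (g : Matrix (Fin 3) (Fin 3) F) = Matrix.transvection i j 1 := by
  fin_cases i <;> fin_cases j
  · exact absurd rfl hij
  · exact ⟨M0*M1*M0*M1*M0*M0*M1*M0*M1*M0, mul_mem (mul_mem (mul_mem (mul_mem (mul_mem (mul_mem (mul_mem (mul_mem (mul_mem (hM0) hM1) hM0) hM1) hM0) hM0) hM1) hM0) hM1) hM0, by simp only [Units.val_mul]; decide⟩
  · exact ⟨M0*M0*M1*M0, mul_mem (mul_mem (mul_mem (hM0) hM0) hM1) hM0, by simp only [Units.val_mul]; decide⟩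
  · exact ⟨M1, hM1, by decide⟩
  · exact absurd rfl hij
  · exact ⟨M0*M0*M1*M0*M1*M0*M0*M1*M0*M1, mul_mem (mul_mem (mul_mem (mul_mem (mul_mem (mul_mem (mul_mem (mul_mem (mul_mem (hM0) hM0) hM1) hM0) hM1) hM0) hM0) hM1) hM0) hM1, by simp only [Units.val_mul]; decide⟩
  · exact ⟨M0*M1*M0*M0*M1*M0*M1*M0*M0*M1, mul_mem (mul_mem (mul_mem (mul_mem (mul_mem (mul_mem (mul_mem (mul_mem (mul_mem (hM0) hM1) hM0) hM0) hM1) hM0) hM1) hM0) hM0) hM1, by simp only [Units.val_mul]; decide⟩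
  · exact ⟨M0*M1*M0*M0, mul_mem (mul_mem (mul_mem (hM0) hM1) hM0) hM0, by simp only [Units.val_mul]; decide⟩
  · exact absurd rfl hij

lemma S_top : S = ⊤ := by
  rw [eq_top_iff]
  intro A _
  have hP : ∃ g ∈ S, (g : Matrix (Fin 3) (Fin 3) F) = (A : Matrix (Fin 3) (Fin 3) F) := by
    apply Matrix.diagonal_transvection_induction
      (fun M => ∃ g ∈ S, (g : Matrix (Fin 3) (Fin 3) F) = M)
    · intro D hD
      have hdet : Matrix.det (A : Matrix (Fin 3) (Fin 3) F) ≠ 0 := by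
        have : IsUnit (Matrix.det (A : Matrix (Fin 3) (Fin 3) F)) :=
          (Matrix.isUnit_iff_isUnit_det _).mp A.isUnit
        exact this.ne_zero
      refine ⟨1, S.one_mem, ?_⟩
      rw [diag_eq_one D (by rw [hD]; exact hdet)]
      rfl
    · rintro ⟨i, j, hij, c⟩
      have hc : c = 0 ∨ c = 1 := by revert c; decide
      rcases hc with rfl | rfl
      · refine ⟨1, S.one_mem, ?_⟩
        simp [Matrix.TransvectionStruct.toMatrix, Matrix.transvection]
      · simpa [Matrix.TransvectionStruct.toMatrix] using transvec_mem i j hij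
    · rintro B C ⟨g, hg, hgB⟩ ⟨h, hh, hhC⟩
      exact ⟨g*h, mul_mem hg hh, by rw [Units.val_mul, hgB, hhC]⟩
  obtain ⟨g, hg, hgA⟩ := hP
  have : g = A := Units.ext hgA
  exact this ▸ hg

lemma e_M0 : e M0 = c[(0 : Fin 7), 2, 1] * c[(3 : Fin 7), 6, 4] := by decide

lemma e_M1 : e M1 = c[(2 : Fin 7), 3] * c[(4 : Fin 7), 5] := by decide

end MonodromyAux

open MonodromyAux in
/-- With `{1,…,7}` identified with `Fin 7` (via `i ↦ i-1`), the permutations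
`σ₀ = (1,3,2)(4,7,5)` and `σ₁ = (3,4)(5,6)` generate a subgroup of `S₇`
isomorphic to `GL₃(𝔽₂)`. -/
theorem monodromy_GL3F2 :
    Nonempty
      ((Subgroup.closure
          ({c[(0 : Fin 7), 2, 1] * c[(3 : Fin 7), 6, 4],
            c[(2 : Fin 7), 3] * c[(4 : Fin 7), 5]} : Set (Equiv.Perm (Fin 7)))) ≃*
        Matrix.GeneralLinearGroup (Fin 3) (ZMod 2)) := by
  have hmap : Subgroup.map e ⊤ =
      Subgroup.closure
          ({c[(0 : Fin 7), 2, 1] * c[(3 : Fin 7), 6, 4],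
            c[(2 : Fin 7), 3] * c[(4 : Fin 7), 5]} : Set (Equiv.Perm (Fin 7))) := by
    rw [← S_top, S, MonoidHom.map_closure, Set.image_pair, e_M0, e_M1]
  exact ⟨(MulEquiv.subgroupCongr hmap.symm).trans
    (((Subgroup.equivMapOfInjective ⊤ e e_injective).symm).trans Subgroup.topEquiv)⟩
end

section
/- Let n ≥ 5 and suppose π₀, π₁ ∈ Sₙ generate a subgroup containing Aₙ, and that the orders of π₀ and π₁ are distinct. Then the subgroup of Sₙ × Sₙ generated by (π₀, π₁) and (π₁, π₀) contains Aₙ × Aₙ. -/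
open Equiv Equiv.Perm Subgroup

theorem Equiv.Perm.inv_apply_self {α : Type*} (f : Equiv.Perm α) (x : α) : f⁻¹ (f x) = x :=
  f.symm_apply_apply x

theorem Equiv.Perm.apply_inv_self {α : Type*} (f : Equiv.Perm α) (x : α) : f (f⁻¹ x) = x :=
  f.apply_symm_apply x

section Cyc
variable {β : Type*} [DecidableEq β]

/-- The 3-cycle x → y → z → x. -/
def cyc (x y z : β) : Equiv.Perm β := Equiv.swap x y * Equiv.swap y z

lemma cyc_x {x y z : β} (hxy : x ≠ y) (hxz : x ≠ z) : cyc x y z x = y := by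
  simp [cyc, Equiv.swap_apply_of_ne_of_ne hxy hxz]

lemma cyc_y {x y z : β} (hzx : z ≠ x) (hzy : z ≠ y) : cyc x y z y = z := by
  simp [cyc, Equiv.swap_apply_of_ne_of_ne hzx hzy]

lemma cyc_z {x y z : β} : cyc x y z z = x := by
  simp [cyc]

lemma cyc_other {x y z w : β} (hx : w ≠ x) (hy : w ≠ y) (hz : w ≠ z) :
    cyc x y z w = w := by
  simp [cyc, Equiv.swap_apply_of_ne_of_ne hy hz, Equiv.swap_apply_of_ne_of_ne hx hy]

lemma cyc_inv_y {x y z : β} (hxy : x ≠ y) (hxz : x ≠ z) : (cyc x y z)⁻¹ y = x := by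
  rw [Equiv.Perm.inv_def, Equiv.symm_apply_eq, cyc_x hxy hxz]

lemma cyc_inv_z {x y z : β} (hzx : z ≠ x) (hzy : z ≠ y) : (cyc x y z)⁻¹ z = y := by
  rw [Equiv.Perm.inv_def, Equiv.symm_apply_eq, cyc_y hzx hzy]

lemma cyc_inv_x {x y z : β} : (cyc x y z)⁻¹ x = z := by
  rw [Equiv.Perm.inv_def, Equiv.symm_apply_eq, cyc_z]

lemma cyc_inv_other {x y z w : β} (hx : w ≠ x) (hy : w ≠ y) (hz : w ≠ z) :
    (cyc x y z)⁻¹ w = w := by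
  rw [Equiv.Perm.inv_def, Equiv.symm_apply_eq, cyc_other hx hy hz]

lemma cyc_sign [Fintype β] {x y z : β} (hxy : x ≠ y) (hyz : y ≠ z) :
    Equiv.Perm.sign (cyc x y z) = 1 := by
  simp [cyc, Equiv.Perm.sign_swap hxy, Equiv.Perm.sign_swap hyz]

lemma cyc_isThreeCycle [Fintype β] {x y z : β} (hxy : x ≠ y) (hxz : x ≠ z) (hyz : y ≠ z) :
    Equiv.Perm.IsThreeCycle (cyc x y z) := by
  have : cyc x y z = Equiv.swap y x * Equiv.swap y z := by
    rw [cyc, Equiv.swap_comm x y]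
  rw [this]
  exact Equiv.Perm.isThreeCycle_swap_mul_swap_same hxy.symm hyz hxz

end Cyc
section Comm
variable {β : Type*} [DecidableEq β]

lemma perm_inv_ne {c : Equiv.Perm β} {u v : β} (h : c v ≠ u) : c⁻¹ u ≠ v :=
  fun he => h (by rw [← he, Equiv.Perm.apply_inv_self])

/-- Key commutator identity: if `a, ca, c²a, c³a` are distinct then
`[c, (a ca c²a)] = (a c³a ca)`. -/
lemma comm_cyc_eq (c : Equiv.Perm β) (a : β)
    (h1 : c a ≠ a) (h2 : c (c a) ≠ a) (h3 : c (c (c a)) ≠ a) :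
    c * cyc a (c a) (c (c a)) * c⁻¹ * (cyc a (c a) (c (c a)))⁻¹
      = cyc a (c (c (c a))) (c a) := by
  have hinj := c.injective
  have d01 : a ≠ c a := h1.symm
  have d02 : a ≠ c (c a) := h2.symm
  have d03 : a ≠ c (c (c a)) := h3.symm
  have d12 : c a ≠ c (c a) := fun h => d01 (hinj h)
  have d13 : c a ≠ c (c (c a)) := fun h => d02 (hinj h)
  have d23 : c (c a) ≠ c (c (c a)) := fun h => d12 (hinj h)
  ext x
  simp only [Equiv.Perm.mul_apply]
  by_cases hx0 : x = a
  · subst hx0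
    rw [cyc_inv_x, Equiv.Perm.inv_apply_self, cyc_y h2 d12.symm, cyc_x d03 d01]
  by_cases hx1 : x = c a
  · subst hx1
    rw [cyc_inv_y d01 d02, cyc_other (perm_inv_ne h1) (perm_inv_ne h2) (perm_inv_ne h3),
      Equiv.Perm.apply_inv_self, cyc_z]
  by_cases hx2 : x = c (c a)
  · subst hx2
    rw [cyc_inv_z h2 d12.symm, Equiv.Perm.inv_apply_self, cyc_x d01 d02,
      cyc_other h2 d23 d12.symm]
  by_cases hx3 : x = c (c (c a))
  · subst hx3
    rw [cyc_inv_other h3 d13.symm d23.symm, Equiv.Perm.inv_apply_self, cyc_z,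
      cyc_y h1 d13]
  · rw [cyc_inv_other hx0 hx1 hx2,
      cyc_other (perm_inv_ne fun h => hx1 h.symm) (perm_inv_ne fun h => hx2 h.symm)
        (perm_inv_ne fun h => hx3 h.symm),
      Equiv.Perm.apply_inv_self, cyc_other hx0 hx3 hx1]

/-- Commutator identity for a 2-orbit `{a, ca}` and a fixed point `e`:
`[c, (a e ca)] = (a e ca)`. -/
lemma comm_cyc_eq_invol (c : Equiv.Perm β) (a e : β)
    (h1 : c a ≠ a) (h2 : c (c a) = a) (h3 : c e = e) :
    c * cyc a e (c a) * c⁻¹ * (cyc a e (c a))⁻¹ = cyc a e (c a) := by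
  have dea : e ≠ a := fun h => h1 (by rw [← h, h3])
  have deb : e ≠ c a := by
    intro h
    apply h1
    have h4 := h3
    rw [h] at h4
    rw [h2] at h4
    exact h4.symm
  have dab : a ≠ c a := h1.symm
  have hca : c⁻¹ a = c a := by nth_rewrite 1 [← h2]; rw [Equiv.Perm.inv_apply_self]
  have he : c⁻¹ e = e := by nth_rewrite 1 [← h3]; rw [Equiv.Perm.inv_apply_self]
  ext x
  simp only [Equiv.Perm.mul_apply]
  by_cases hx0 : x = a
  · rw [hx0, cyc_inv_x, Equiv.Perm.inv_apply_self, cyc_x dea.symm dab, h3]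
  by_cases hx1 : x = e
  · rw [hx1, cyc_inv_y dea.symm dab, hca, cyc_z, cyc_y h1 deb.symm]
  by_cases hx2 : x = c a
  · rw [hx2, cyc_inv_z h1 deb.symm, he, cyc_y h1 deb.symm, h2, cyc_z]
  · have hu0 : c⁻¹ x ≠ a := perm_inv_ne (fun h => hx2 h.symm)
    have hu1 : c⁻¹ x ≠ e := perm_inv_ne (fun h => hx1 (by rw [← h3, h]))
    have hu2 : c⁻¹ x ≠ c a := perm_inv_ne (fun h => hx0 (by rw [← h2, h]))
    rw [cyc_inv_other hx0 hx1 hx2, cyc_other hu0 hu1 hu2,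
      Equiv.Perm.apply_inv_self, cyc_other hx0 hx1 hx2]

end Comm
section Main
open Equiv Equiv.Perm Subgroup

variable {n : ℕ}

lemma exists_notin4 (hn : 5 ≤ n) (a b c d : Fin n) :
    ∃ e : Fin n, e ≠ a ∧ e ≠ b ∧ e ≠ c ∧ e ≠ d := by
  by_contra h
  push_neg at h
  have hsub : (Finset.univ : Finset (Fin n)) ⊆ {a, b, c, d} := by
    intro e _
    simp only [Finset.mem_insert, Finset.mem_singleton]
    by_cases h1 : e = a; · exact Or.inl h1
    by_cases h2 : e = b; · exact Or.inr (Or.inl h2)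
    by_cases h3 : e = c; · exact Or.inr (Or.inr (Or.inl h3))
    exact Or.inr (Or.inr (Or.inr (h e h1 h2 h3)))
  have h4 : ({a, b, c, d} : Finset (Fin n)).card ≤ 4 := by
    apply le_trans (Finset.card_insert_le _ _)
    apply Nat.succ_le_succ
    apply le_trans (Finset.card_insert_le _ _)
    apply Nat.succ_le_succ
    apply le_trans (Finset.card_insert_le _ _)
    apply Nat.succ_le_succ
    simp
  have h5 := Finset.card_le_card hsub
  rw [Finset.card_univ, Fintype.card_fin] at h5
  omega

lemma exists_threeCycle_mem (hn : 5 ≤ n) (K : Subgroup (Equiv.Perm (Fin n)))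
    (hK : ∀ g ∈ alternatingGroup (Fin n), ∀ c ∈ K, g * c * g⁻¹ ∈ K)
    (c : Equiv.Perm (Fin n)) (hc : c ∈ K) (hc1 : c ≠ 1) :
    ∃ τ ∈ K, Equiv.Perm.IsThreeCycle τ := by
  have commem : ∀ t ∈ K, ∀ σ ∈ alternatingGroup (Fin n), t * σ * t⁻¹ * σ⁻¹ ∈ K := by
    intro t ht σ hσ
    have h1 : σ * t⁻¹ * σ⁻¹ ∈ K := hK σ hσ t⁻¹ (K.inv_mem ht)
    have h2 : t * (σ * t⁻¹ * σ⁻¹) ∈ K := K.mul_mem ht h1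
    simpa [mul_assoc] using h2
  have cycA : ∀ x y z : Fin n, x ≠ y → y ≠ z → cyc x y z ∈ alternatingGroup (Fin n) :=
    fun x y z h h' => Equiv.Perm.mem_alternatingGroup.mpr (cyc_sign h h')
  -- Lemma B: four distinct iterates give a three-cycle in K
  have lemB : ∀ t ∈ K, ∀ a : Fin n, t a ≠ a → t (t a) ≠ a → t (t (t a)) ≠ a →
      ∃ τ ∈ K, Equiv.Perm.IsThreeCycle τ := by
    intro t ht a h1 h2 h3
    have hyz : t a ≠ t (t a) := fun h => absurd (t.injective h).symm h1
    refine ⟨cyc a (t (t (t a))) (t a), ?_, ?_⟩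
    · rw [← comm_cyc_eq t a h1 h2 h3]
      exact commem t ht _ (cycA _ _ _ h1.symm hyz)
    · exact cyc_isThreeCycle h3.symm h1.symm (fun h => h2 (t.injective h))
  -- Lemma C: a 2-orbit plus a fixed point gives a three-cycle in K
  have lemC : ∀ t ∈ K, ∀ a e : Fin n, t a ≠ a → t (t a) = a → t e = e →
      ∃ τ ∈ K, Equiv.Perm.IsThreeCycle τ := by
    intro t ht a e h1 h2 h3
    have dea : e ≠ a := fun h => h1 (by rw [← h, h3])
    have deb : e ≠ t a := by
      intro h
      apply h1
      have h4 := h3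
      rw [h] at h4
      rw [h2] at h4
      exact h4.symm
    refine ⟨cyc a e (t a), ?_, ?_⟩
    · rw [← comm_cyc_eq_invol t a e h1 h2 h3]
      exact commem t ht _ (cycA _ _ _ dea.symm deb)
    · exact cyc_isThreeCycle dea.symm h1.symm deb
  -- get a moved point
  obtain ⟨a, ha⟩ : ∃ a, c a ≠ a := by
    by_contra h
    push_neg at h
    exact hc1 (by ext x; simp [h x])
  by_cases h2 : ∀ x, c (c x) = x
  · -- involution case
    have hcinv : ∀ x, c⁻¹ x = c x := by
      intro x
      nth_rewrite 1 [← h2 x]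
      rw [Equiv.Perm.inv_apply_self]
    by_cases hfix : ∃ e, c e = e
    · obtain ⟨e, he⟩ := hfix
      exact lemC c hc a e ha (h2 a) he
    · push_neg at hfix
      obtain ⟨p, hp1, hp2, -, -⟩ := exists_notin4 hn a (c a) a a
      set σ := cyc a (c a) p with hσdef
      set t := c * σ * c⁻¹ * σ⁻¹ with htdef
      have ht : t ∈ K := commem c hc σ (cycA _ _ _ ha.symm hp2.symm)
      have hq1 : c p ≠ a := fun h => hp2 (by rw [← h2 p, h])
      have hq2 : c p ≠ c a := fun h => hp1 (c.injective h)
      have hta : t a = p := by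
        rw [htdef]
        simp only [Equiv.Perm.mul_apply]
        rw [hσdef, cyc_inv_x, hcinv p, cyc_other hq1 hq2 (hfix p), h2 p]
      have htp : t p = a := by
        rw [htdef]
        simp only [Equiv.Perm.mul_apply]
        rw [hσdef, cyc_inv_z hp1 hp2, Equiv.Perm.inv_apply_self,
          cyc_x ha.symm hp1.symm, h2 a]
      obtain ⟨f, hf1, hf2, hf3, hf4⟩ := exists_notin4 hn a (c a) p (c p)
      have hcf1 : c f ≠ a := fun h => hf2 (by rw [← h2 f, h])
      have hcf2 : c f ≠ c a := fun h => hf1 (c.injective h)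
      have hcf3 : c f ≠ p := fun h => hf4 (by rw [← h2 f, h])
      have htf : t f = f := by
        rw [htdef]
        simp only [Equiv.Perm.mul_apply]
        rw [hσdef, cyc_inv_other hf1 hf2 hf3, hcinv f, cyc_other hcf1 hcf2 hcf3, h2 f]
      refine lemC t ht a f ?_ ?_ htf
      · rw [hta]; exact hp1
      · rw [hta, htp]
  · push_neg at h2
    obtain ⟨x, hx2⟩ := h2
    have hx1 : c x ≠ x := fun h => hx2 (by rw [h]; exact h)
    by_cases h3 : c (c (c x)) = x
    · -- 3-orbit
      have hb2 : c x ≠ c (c x) := fun h => absurd (c.injective h).symm hx1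
      by_cases hp : ∃ p, (p ≠ x ∧ p ≠ c x ∧ p ≠ c (c x)) ∧ c p ≠ p
      · obtain ⟨p, ⟨hp1, hp2, hp3⟩, hp4⟩ := hp
        set σ := cyc x (c x) p with hσdef
        set t := c * σ * c⁻¹ * σ⁻¹ with htdef
        have ht : t ∈ K := commem c hc σ (cycA _ _ _ hx1.symm hp2.symm)
        have hcinvx : c⁻¹ x = c (c x) := by
          nth_rewrite 1 [← h3]
          rw [Equiv.Perm.inv_apply_self]
        have hu1 : c⁻¹ p ≠ x := perm_inv_ne (fun h => hp2 h.symm)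
        have hu2 : c⁻¹ p ≠ c x := perm_inv_ne (fun h => hp3 h.symm)
        have hu3 : c⁻¹ p ≠ p := perm_inv_ne (fun h => hp4 h)
        have hta : t x = p := by
          rw [htdef]
          simp only [Equiv.Perm.mul_apply]
          rw [hσdef, cyc_inv_x, cyc_other hu1 hu2 hu3, Equiv.Perm.apply_inv_self]
        have htp : t p = c (c x) := by
          rw [htdef]
          simp only [Equiv.Perm.mul_apply]
          rw [hσdef, cyc_inv_z hp1 hp2, Equiv.Perm.inv_apply_self, cyc_x hx1.symm hp1.symm]
        have htq : t (c (c x)) = c p := by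
          rw [htdef]
          simp only [Equiv.Perm.mul_apply]
          rw [hσdef, cyc_inv_other hx2 hb2.symm hp3.symm, Equiv.Perm.inv_apply_self,
            cyc_y hp1 hp2]
        refine lemB t ht x ?_ ?_ ?_
        · rw [hta]; exact hp1
        · rw [hta, htp]; exact hx2
        · rw [hta, htp, htq]
          intro h
          apply hp3
          rw [← hcinvx, ← h, Equiv.Perm.inv_apply_self]
      · -- c is itself a three-cycle
        push_neg at hp
        refine ⟨c, hc, ?_⟩
        rw [← card_support_eq_three_iff]
        have hsupp : c.support = {x, c x, c (c x)} := by
          ext y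
          simp only [Equiv.Perm.mem_support, Finset.mem_insert, Finset.mem_singleton]
          constructor
          · intro hy
            by_contra hy'
            push_neg at hy'
            exact hy (hp y ⟨hy'.1, hy'.2.1, hy'.2.2⟩)
          · rintro (rfl | rfl | rfl)
            · exact hx1
            · exact fun h => hx1 (c.injective h)
            · rw [h3]; exact fun h => hx2 h.symm
        have d12 : c x ≠ c (c x) := fun h => hx1 (c.injective h).symm
        rw [hsupp, Finset.card_insert_of_notMem (by simp [Ne.symm hx1, Ne.symm hx2]),
          Finset.card_insert_of_notMem (by simp [d12]), Finset.card_singleton]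
    · exact lemB c hc x hx1 hx2 h3

end Main
section Final
open Equiv Equiv.Perm Subgroup

variable {n : ℕ}

lemma alternating_le_of_exists_ne_one (hn : 5 ≤ n) (K : Subgroup (Equiv.Perm (Fin n)))
    (hK : ∀ g ∈ alternatingGroup (Fin n), ∀ c ∈ K, g * c * g⁻¹ ∈ K)
    (c : Equiv.Perm (Fin n)) (hc : c ∈ K) (hc1 : c ≠ 1) :
    alternatingGroup (Fin n) ≤ K := by
  obtain ⟨τ, hτK, hτ3⟩ := exists_threeCycle_mem hn K hK c hc hc1
  have h5 : 5 ≤ Fintype.card (Fin n) := by rw [Fintype.card_fin]; exact hn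
  set N := K.subgroupOf (alternatingGroup (Fin n)) with hN
  haveI hNn : N.Normal := by
    constructor
    intro x hx g
    rw [hN, Subgroup.mem_subgroupOf] at hx ⊢
    simpa using hK g g.2 x hx
  have hτN : (⟨τ, hτ3.mem_alternatingGroup⟩ : alternatingGroup (Fin n)) ∈ N := by
    rw [hN, Subgroup.mem_subgroupOf]; exact hτK
  have hle : Subgroup.normalClosure
      ({⟨τ, hτ3.mem_alternatingGroup⟩} : Set (alternatingGroup (Fin n))) ≤ N :=
    Subgroup.normalClosure_le_normal (Set.singleton_subset_iff.mpr hτN)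
  rw [hτ3.alternating_normalClosure (by rwa [Nat.card_eq_fintype_card])] at hle
  intro g hg
  have hgN : (⟨g, hg⟩ : alternatingGroup (Fin n)) ∈ N := hle (Subgroup.mem_top _)
  rwa [hN, Subgroup.mem_subgroupOf] at hgN

end Final

/-- If `n ≥ 5`, `π₀, π₁ ∈ Sₙ` generate a subgroup containing `Aₙ`, and
`π₀, π₁` have distinct orders, then `⟨(π₀,π₁), (π₁,π₀)⟩ ≤ Sₙ × Sₙ`
contains `Aₙ × Aₙ`. -/
theorem closure_pairs_contains_An_prod_An (n : ℕ) (hn : 5 ≤ n)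
    (π₀ π₁ : Equiv.Perm (Fin n))
    (hgen : alternatingGroup (Fin n) ≤ Subgroup.closure {π₀, π₁})
    (hord : orderOf π₀ ≠ orderOf π₁) :
    (alternatingGroup (Fin n)).prod (alternatingGroup (Fin n)) ≤
      Subgroup.closure ({(π₀, π₁), (π₁, π₀)} :
        Set (Equiv.Perm (Fin n) × Equiv.Perm (Fin n))) := by
  classical
  set S : Set (Equiv.Perm (Fin n) × Equiv.Perm (Fin n)) := {(π₀, π₁), (π₁, π₀)} with hS
  set H := Subgroup.closure S with hH
  have hswap : ∀ p : Equiv.Perm (Fin n) × Equiv.Perm (Fin n), p ∈ H → (p.2, p.1) ∈ H := by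
    intro p hp
    have hmap : H.map (MulEquiv.prodComm :
        (Equiv.Perm (Fin n) × Equiv.Perm (Fin n)) ≃* _).toMonoidHom = H := by
      rw [hH, MonoidHom.map_closure]
      congr 1
      rw [hS, Set.image_insert_eq, Set.image_singleton]
      simp only [MulEquiv.coe_toMonoidHom, MulEquiv.coe_prodComm, Prod.swap_prod_mk]
      exact Set.pair_comm _ _
    rw [← hmap]
    exact ⟨p, hp, rfl⟩
  have hfst : ∀ g : Equiv.Perm (Fin n), g ∈ Subgroup.closure {π₀, π₁} →
      ∃ b, (g, b) ∈ H := by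
    intro g hg
    have hmap : H.map (MonoidHom.fst _ _) = Subgroup.closure {π₀, π₁} := by
      rw [hH, MonoidHom.map_closure]
      congr 1
      rw [hS, Set.image_insert_eq, Set.image_singleton]
      simp
    rw [← hmap] at hg
    obtain ⟨p, hp, hpe⟩ := hg
    refine ⟨p.2, ?_⟩
    have hgp : ((g, p.2) : _ × _) = p := by rw [← hpe]; exact Prod.mk.eta
    rw [hgp]
    exact hp
  set K := H.comap (MonoidHom.inr (Equiv.Perm (Fin n)) (Equiv.Perm (Fin n))) with hKdef
  have hKmem : ∀ c : Equiv.Perm (Fin n), c ∈ K ↔ ((1 : Equiv.Perm (Fin n)), c) ∈ H :=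
    fun c => Iff.rfl
  have hKnorm : ∀ g ∈ alternatingGroup (Fin n), ∀ c ∈ K, g * c * g⁻¹ ∈ K := by
    intro g hg c hcK
    obtain ⟨b, hb⟩ := hfst g (hgen hg)
    have hbg : ((b, g) : _ × _) ∈ H := hswap _ hb
    have hm : ((b, g) : _ × _) * (1, c) * (b, g)⁻¹ ∈ H :=
      H.mul_mem (H.mul_mem hbg ((hKmem c).1 hcK)) (H.inv_mem hbg)
    have he : ((b, g) : _ × _) * (1, c) * (b, g)⁻¹ = (1, g * c * g⁻¹) := by
      rw [Prod.inv_mk, Prod.mk_mul_mk, Prod.mk_mul_mk, mul_one, mul_inv_cancel]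
    exact (hKmem _).2 (he ▸ hm)
  by_cases hT : ∃ c ∈ K, c ≠ 1
  · obtain ⟨c, hcK, hc1⟩ := hT
    have hAK := alternating_le_of_exists_ne_one hn K hKnorm c hcK hc1
    intro p hp
    rw [Subgroup.mem_prod] at hp
    have h2 : ((1 : Equiv.Perm (Fin n)), p.2) ∈ H := (hKmem _).1 (hAK hp.2)
    have h1 : ((p.1, (1 : Equiv.Perm (Fin n))) : _ × _) ∈ H :=
      hswap _ ((hKmem _).1 (hAK hp.1))
    have hm : ((p.1, (1 : Equiv.Perm (Fin n))) : _ × _) * (1, p.2) ∈ H := H.mul_mem h1 h2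
    have he : ((p.1, (1 : Equiv.Perm (Fin n))) : _ × _) * (1, p.2) = p := by
      rw [Prod.mk_mul_mk, mul_one, one_mul]
    rwa [he] at hm
  · push_neg at hT
    exfalso
    apply hord
    rw [orderOf_eq_orderOf_iff]
    intro k
    have hg0 : ((π₀, π₁) : _ × _) ∈ H := Subgroup.subset_closure (by rw [hS]; left; rfl)
    have hg1 : ((π₁, π₀) : _ × _) ∈ H := Subgroup.subset_closure (by rw [hS]; right; rfl)
    constructor
    · intro hk
      have hpow : ((π₀, π₁) : _ × _) ^ k ∈ H := H.pow_mem hg0 k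
      have he : ((π₀, π₁) : _ × _) ^ k = ((π₀ ^ k, π₁ ^ k) : _ × _) := rfl
      rw [he, hk] at hpow
      exact hT _ ((hKmem _).2 hpow)
    · intro hk
      have hpow : ((π₁, π₀) : _ × _) ^ k ∈ H := H.pow_mem hg1 k
      have he : ((π₁, π₀) : _ × _) ^ k = ((π₁ ^ k, π₀ ^ k) : _ × _) := rfl
      rw [he, hk] at hpow
      exact hT _ ((hKmem _).2 hpow)
end

section
/- Let n ≥ 5 and suppose π₀, π₁ ∈ Sₙ generate a subgroup containing Aₙ. Then the subgroup of Sₙ × Sₙ × Sₙ generated by (π₀, π₁, id), (id, π₀, π₁), and (π₁, id, π₀) contains Aₙ × Aₙ × Aₙ. -/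
open Equiv Equiv.Perm Subgroup



set_option linter.unusedSectionVars false
set_option maxHeartbeats 1000000

variable {α : Type*} [Fintype α] [DecidableEq α]

lemma aux_three_le_card_support {u : Perm α} (h1 : u ≠ 1) (hs : Equiv.Perm.sign u = 1) :
    3 ≤ u.support.card := by
  rcases Nat.lt_or_ge u.support.card 3 with h | h
  · interval_cases hc : u.support.card
    · exact absurd (support_eq_empty_iff.mp (Finset.card_eq_zero.mp hc)) h1
    · exact absurd hc (card_support_ne_one u)
    · obtain ⟨x, y, hxy, rfl⟩ := card_support_eq_two.mp hc
      rw [sign_swap hxy] at hs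
      exact absurd hs (by decide)
  · exact h

lemma aux_isThreeCycle_of_support_le {u : Perm α} {a b c : α} (h1 : u ≠ 1)
    (hs : Equiv.Perm.sign u = 1) (hsupp : u.support ⊆ {a, b, c}) :
    u.IsThreeCycle := by
  refine card_support_eq_three_iff.mp (le_antisymm ?_ (aux_three_le_card_support h1 hs))
  calc u.support.card ≤ ({a,b,c} : Finset α).card := Finset.card_le_card hsupp
    _ ≤ 3 := by
      refine (Finset.card_insert_le _ _).trans ?_
      have h := Finset.card_insert_le b ({c} : Finset α)
      rw [Finset.card_singleton] at h; omega

lemma aux_comm_support_le (σ u : Perm α) :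
    (σ * u * σ⁻¹ * u⁻¹).support ⊆ σ.support ∪ σ.support.image u := by
  intro p hp
  have h2 : σ * u * σ⁻¹ * u⁻¹ = σ * (u * σ⁻¹ * u⁻¹) := by group
  rw [h2] at hp
  have h3 := support_mul_le σ (u * σ⁻¹ * u⁻¹) hp
  rcases Finset.mem_union.mp h3 with h | h
  · exact Finset.mem_union_left _ h
  · rw [support_conj, support_inv] at h
    obtain ⟨q, hq, rfl⟩ := Finset.mem_map.mp h
    exact Finset.mem_union_right _ (Finset.mem_image_of_mem _ hq)

lemma aux_support_swap_swap {a b c : α} (hab : a ≠ b) (hbc : b ≠ c) :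
    (swap a b * swap b c).support ⊆ {a, b, c} := by
  refine (support_mul_le _ _).trans ?_
  rw [support_swap hab, support_swap hbc]
  intro x hx
  rcases Finset.mem_union.mp hx with h | h <;> simp at h <;> rcases h with rfl | rfl <;> simp

lemma aux_sign_swap_swap {a b c : α} (hab : a ≠ b) (hbc : b ≠ c) :
    Equiv.Perm.sign (swap a b * swap b c) = 1 := by
  rw [map_mul, sign_swap hab, sign_swap hbc]; decide

lemma aux_comm_ne_one {σ u : Perm α} {x : α} (h : σ (u x) ≠ u (σ x)) :
    σ * u * σ⁻¹ * u⁻¹ ≠ 1 := by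
  intro he
  have h1 : σ * u * σ⁻¹ = u := mul_inv_eq_one.mp he
  have h2 : σ * u = u * σ := by
    calc σ * u = (σ * u * σ⁻¹) * σ := by group
    _ = u * σ := by rw [h1]
  have := congrArg (fun f : Perm α => f x) h2
  simp only [mul_apply] at this
  exact h this

lemma aux_sss_a {a b c : α} (hab : a ≠ b) (hac : a ≠ c) : (swap a b * swap b c) a = b := by
  rw [mul_apply, swap_apply_of_ne_of_ne hab hac, swap_apply_left]

lemma aux_sss_b {a b c : α} (hca : c ≠ a) (hcb : c ≠ b) : (swap a b * swap b c) b = c := by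
  rw [mul_apply, swap_apply_left, swap_apply_of_ne_of_ne hca hcb]

lemma aux_sign_comm {σ u : Perm α} (hσ : Equiv.Perm.sign σ = 1)
    (hu : Equiv.Perm.sign u = 1) : Equiv.Perm.sign (σ * u * σ⁻¹ * u⁻¹) = 1 := by
  simp [map_mul, map_inv, hσ, hu]

lemma aux_card3 {a b c : α} (hab : a ≠ b) (hac : a ≠ c) (hbc : b ≠ c) :
    ({a, b, c} : Finset α).card = 3 := by
  rw [Finset.card_insert_of_notMem (by simp [hab, hac]),
    Finset.card_insert_of_notMem (by simp [hbc]), Finset.card_singleton]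

lemma aux_card4 {a b c d : α} (hab : a ≠ b) (hac : a ≠ c) (had : a ≠ d) (hbc : b ≠ c)
    (hbd : b ≠ d) (hcd : c ≠ d) : ({a, b, c, d} : Finset α).card = 4 := by
  rw [Finset.card_insert_of_notMem (by simp [hab, hac, had]), aux_card3 hbc hbd hcd]

lemma aux_card_le4 (a b c d : α) : ({a, b, c, d} : Finset α).card ≤ 4 := by
  have h1 := Finset.card_insert_le a ({b, c, d} : Finset α)
  have h2 := Finset.card_insert_le b ({c, d} : Finset α)
  have h3 := Finset.card_insert_le c ({d} : Finset α)
  have h4 : ({d} : Finset α).card = 1 := Finset.card_singleton d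
  omega

lemma aux_card_le5 (a b c d e : α) : ({a, b, c, d, e} : Finset α).card ≤ 5 := by
  have h1 := Finset.card_insert_le a ({b, c, d, e} : Finset α)
  have h2 := aux_card_le4 b c d e
  omega

/-- Key extraction lemma: a subgroup of `Perm α` (`5 ≤ |α|`) that is normalized by all even
permutations and contains a nontrivial even permutation contains a three-cycle. -/
lemma aux_exists_threeCycle (h5 : 5 ≤ Fintype.card α) (N : Subgroup (Perm α))
    (hN : ∀ g : Perm α, Equiv.Perm.sign g = 1 → ∀ x ∈ N, g * x * g⁻¹ ∈ N)
    (u0 : Perm α) (hu0 : u0 ∈ N) (h10 : u0 ≠ 1) (hs0 : Equiv.Perm.sign u0 = 1) :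
    ∃ τ ∈ N, τ.IsThreeCycle := by
  suffices H : ∀ k, ∀ u : Perm α, u.support.card = k → u ∈ N → u ≠ 1 →
      Equiv.Perm.sign u = 1 → ∃ τ ∈ N, τ.IsThreeCycle from H _ u0 rfl hu0 h10 hs0
  intro k
  induction k using Nat.strong_induction_on with
  | _ k IH =>
  intro u hk hu h1 hs
  have huinj := u.injective
  have key : ∀ σ : Perm α, Equiv.Perm.sign σ = 1 → σ * u * σ⁻¹ * u⁻¹ ∈ N :=
    fun σ hσ => mul_mem (hN σ hσ u hu) (inv_mem hu)
  have hcard3 : 3 ≤ u.support.card := aux_three_le_card_support h1 hs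
  by_cases hk3 : u.support.card = 3
  · exact ⟨u, hu, card_support_eq_three_iff.mp hk3⟩
  -- henceforth 4 ≤ card
  obtain ⟨a, ha⟩ : ∃ a, a ∈ u.support := Finset.card_pos.mp (by omega)
  obtain ⟨b, hb⟩ : ∃ b, u a = b := ⟨u a, rfl⟩
  have hua : u a ≠ a := mem_support.mp ha
  have hab : a ≠ b := fun h => hua (hb.trans h.symm)
  have hbsupp : b ∈ u.support := hb ▸ apply_mem_support.mpr ha
  -- trick 1 : if u has a 2-cycle (a b) and a fixed point f outside, we get a 3-cycle.
  have trick1 : u b = a → ∀ f, f ≠ a → f ≠ b → u f = f → ∃ τ ∈ N, τ.IsThreeCycle := by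
    intro hba2 f hfa hfb hff
    have hbf : b ≠ f := fun h => hfb h.symm
    have hσs : Equiv.Perm.sign (swap a b * swap b f) = 1 := aux_sign_swap_swap hab hbf
    refine ⟨_, key (swap a b * swap b f) hσs, ?_⟩
    have hσa : (swap a b * swap b f) a = b := aux_sss_a hab (Ne.symm hfa)
    have hσb : (swap a b * swap b f) b = f := aux_sss_b hfa hfb
    apply aux_isThreeCycle_of_support_le (a := a) (b := b) (c := f)
    · apply aux_comm_ne_one (x := a)
      rw [hb, hσb, hσa, hba2]
      exact hfa
    · exact aux_sign_comm hσs hs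
    · intro x hx
      rcases Finset.mem_union.mp (aux_comm_support_le _ u hx) with h | h
      · exact aux_support_swap_swap hab hbf h
      · obtain ⟨q, hq, rfl⟩ := Finset.mem_image.mp h
        have hq' := aux_support_swap_swap hab hbf hq
        simp only [Finset.mem_insert, Finset.mem_singleton] at hq' ⊢
        rcases hq' with rfl | rfl | rfl
        · rw [hb]; tauto
        · rw [hba2]; tauto
        · rw [hff]; tauto
  by_cases hk4 : u.support.card = 4
  · -- endgame for support of size 4
    by_cases hba2 : u b = a
    · -- 2-cycle; there is a fixed point outside
      obtain ⟨f, hf⟩ : ∃ f, f ∉ u.support := by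
        by_contra h
        push_neg at h
        have : u.support = Finset.univ := Finset.eq_univ_iff_forall.mpr h
        rw [this, Finset.card_univ] at hk4
        omega
      exact trick1 hba2 f (fun h => hf (h ▸ ha)) (fun h => hf (h ▸ hbsupp))
        (notMem_support.mp hf)
    · -- u b ∉ {a, b} : derive a contradiction
      exfalso
      obtain ⟨c, hc⟩ : ∃ c, u b = c := ⟨u b, rfl⟩
      have hcb : c ≠ b := fun h => (mem_support.mp hbsupp) (hc.trans h)
      have hca : c ≠ a := fun h => hba2 (hc.trans h)
      have hcsupp : c ∈ u.support := hc ▸ apply_mem_support.mpr hbsupp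
      have habc : ({a, b, c} : Finset α) ⊆ u.support := by
        intro x hx; simp at hx; rcases hx with rfl | rfl | rfl <;> assumption
      obtain ⟨z, hz⟩ : ∃ z, z ∈ u.support \ ({a, b, c} : Finset α) := by
        have hcard : (u.support \ ({a, b, c} : Finset α)).card =
            u.support.card - ({a, b, c} : Finset α).card := Finset.card_sdiff_of_subset habc
        rw [aux_card3 hab (Ne.symm hca) (Ne.symm hcb), hk4] at hcard
        exact Finset.card_pos.mp (by omega)
      rw [Finset.mem_sdiff] at hz
      obtain ⟨hzsupp, hzabc⟩ := hz
      simp only [Finset.mem_insert, Finset.mem_singleton, not_or] at hzabc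
      obtain ⟨hza, hzb, hzc⟩ := hzabc
      have hsuppeq : u.support = {a, b, c, z} := by
        refine (Finset.eq_of_subset_of_card_le ?_ ?_).symm
        · intro x hx; simp at hx
          rcases hx with rfl | rfl | rfl | rfl <;> assumption
        · rw [hk4, aux_card4 hab (Ne.symm hca) (fun h => hza h.symm) (Ne.symm hcb)
            (fun h => hzb h.symm) (fun h => hzc h.symm)]
      have hucsupp : u c ∈ u.support := apply_mem_support.mpr hcsupp
      have hucc : u c ≠ c := mem_support.mp hcsupp
      have hucb : u c ≠ b := fun h => hca (huinj (h.trans hb.symm))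
      rcases (by rw [hsuppeq] at hucsupp; simpa using hucsupp :
          u c = a ∨ u c = b ∨ u c = c ∨ u c = z) with huc | huc | huc | huc
      · -- u c = a : then z is stuck
        have huzsupp : u z ∈ u.support := apply_mem_support.mpr hzsupp
        have huzz : u z ≠ z := mem_support.mp hzsupp
        have huza : u z ≠ a := fun h => hzc (huinj (h.trans huc.symm))
        have huzb : u z ≠ b := fun h => hza (huinj (h.trans hb.symm))
        have huzc : u z ≠ c := fun h => hzb (huinj (h.trans hc.symm))
        rw [hsuppeq] at huzsupp; simp at huzsupp; tauto
      · exact hucb huc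
      · exact hucc huc
      · -- u c = z : then u z = a and u is a 4-cycle, contradicting evenness
        have huzsupp : u z ∈ u.support := apply_mem_support.mpr hzsupp
        have huzb : u z ≠ b := fun h => hza (huinj (h.trans hb.symm))
        have huzc : u z ≠ c := fun h => hzb (huinj (h.trans hc.symm))
        have huzz : u z ≠ z := mem_support.mp hzsupp
        have huza : u z = a := by
          rw [hsuppeq] at huzsupp; simp at huzsupp; tauto
        have hbc : b ≠ c := Ne.symm hcb
        have hcz : c ≠ z := Ne.symm hzc
        have hueq : u = swap a b * swap b c * swap c z := by
          ext x
          simp only [mul_apply]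
          by_cases hxa : x = a
          · subst hxa
            rw [swap_apply_of_ne_of_ne (Ne.symm hca) (fun h => hza h.symm),
              swap_apply_of_ne_of_ne hab (Ne.symm hca), swap_apply_left, hb]
          by_cases hxb : x = b
          · subst hxb
            rw [swap_apply_of_ne_of_ne hbc (fun h => hzb h.symm), swap_apply_left,
              swap_apply_of_ne_of_ne hca hcb, hc]
          by_cases hxc : x = c
          · subst hxc
            rw [swap_apply_left, swap_apply_of_ne_of_ne hzb hzc,
              swap_apply_of_ne_of_ne hza hzb, huc]
          by_cases hxz : x = z
          · subst hxz
            rw [swap_apply_right, swap_apply_right, swap_apply_right, huza]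
          · have hxsupp : x ∉ u.support := by
              rw [hsuppeq]; simp [hxa, hxb, hxc, hxz]
            rw [notMem_support.mp hxsupp,
              swap_apply_of_ne_of_ne (fun h => hxc h) (fun h => hxz h),
              swap_apply_of_ne_of_ne (fun h => hxb h) (fun h => hxc h),
              swap_apply_of_ne_of_ne (fun h => hxa h) (fun h => hxb h)]
        rw [hueq, map_mul, map_mul, sign_swap hab, sign_swap hbc, sign_swap hcz] at hs
        exact absurd hs (by decide)
  · -- main case : 5 ≤ card support
    have hk5 : 5 ≤ k := by omega
    -- generic recursion step
    have step : ∀ w : α, w ≠ a → w ≠ b → w ≠ u b →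
        ({a, b, w, u b, u w} : Finset α).card < k → ∃ τ ∈ N, τ.IsThreeCycle := by
      intro w hwa hwb hwub hlt
      have hbw : b ≠ w := Ne.symm hwb
      have hσs : Equiv.Perm.sign (swap a b * swap b w) = 1 := aux_sign_swap_swap hab hbw
      have hσa : (swap a b * swap b w) a = b := aux_sss_a hab (Ne.symm hwa)
      have hσb : (swap a b * swap b w) b = w := aux_sss_b hwa hwb
      set τ := (swap a b * swap b w) * u * (swap a b * swap b w)⁻¹ * u⁻¹ with hτ
      have hτN : τ ∈ N := key _ hσs
      have hτ1 : τ ≠ 1 := by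
        apply aux_comm_ne_one (x := a)
        rw [hb, hσb, hσa]
        exact hwub
      have hτs : Equiv.Perm.sign τ = 1 := aux_sign_comm hσs hs
      have hτsupp : τ.support ⊆ {a, b, w, u b, u w} := by
        intro x hx
        rcases Finset.mem_union.mp (aux_comm_support_le _ u hx) with h | h
        · have := aux_support_swap_swap hab hbw h
          simp only [Finset.mem_insert, Finset.mem_singleton] at this ⊢
          tauto
        · obtain ⟨q, hq, rfl⟩ := Finset.mem_image.mp h
          have hq' := aux_support_swap_swap hab hbw hq
          simp only [Finset.mem_insert, Finset.mem_singleton] at hq' ⊢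
          rcases hq' with rfl | rfl | rfl
          · rw [hb]; tauto
          · tauto
          · tauto
      exact IH τ.support.card (lt_of_le_of_lt (Finset.card_le_card hτsupp) hlt) τ rfl hτN hτ1 hτs
    by_cases hba2 : u b = a
    · -- case I : u has the 2-cycle (a b)
      by_cases hfix : ∃ f, f ≠ a ∧ f ≠ b ∧ u f = f
      · obtain ⟨f, hfa, hfb, hff⟩ := hfix
        exact trick1 hba2 f hfa hfb hff
      · -- no fixed point outside {a, b} : support is everything
        push_neg at hfix
        obtain ⟨d, hd⟩ : ∃ d, d ∉ ({a, b} : Finset α) := by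
          by_contra h
          push_neg at h
          have hsub : (Finset.univ : Finset α) ⊆ ({a, b} : Finset α) := fun x _ => h x
          have h2 := Finset.card_le_card hsub
          rw [Finset.card_univ] at h2
          have h3 := Finset.card_insert_le a ({b} : Finset α)
          have h4 : ({b} : Finset α).card = 1 := Finset.card_singleton b
          omega
        simp only [Finset.mem_insert, Finset.mem_singleton, not_or] at hd
        obtain ⟨hda, hdb⟩ := hd
        have huniv : u.support = Finset.univ := by
          apply Finset.eq_univ_iff_forall.mpr
          intro x
          by_cases hxa : x = a
          · exact hxa ▸ ha
          by_cases hxb : x = b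
          · exact hxb ▸ hbsupp
          · exact mem_support.mpr (hfix x hxa hxb)
        have hkeq : k = Fintype.card α := by
          rw [← hk, huniv, Finset.card_univ]
        apply step d hda hdb (by rw [hba2]; exact hda)
        rw [hba2]
        have hsub : ({a, b, d, a, u d} : Finset α) ⊆ ({a, b, d, u d} : Finset α) := by
          intro x hx; simp at hx ⊢; tauto
        have h4 := aux_card_le4 a b d (u d)
        have := Finset.card_le_card hsub
        omega
    · -- case II : u b = c ≠ a
      obtain ⟨c, hc⟩ : ∃ c, u b = c := ⟨u b, rfl⟩
      have hca : c ≠ a := fun h => hba2 (hc.trans h)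
      have hcb : c ≠ b := fun h => (mem_support.mp hbsupp) (hc.trans h)
      obtain ⟨e, he⟩ : ∃ e, u e = a := ⟨u⁻¹ a, by simp⟩
      have hea : e ≠ a := fun h => hua (by rw [h] at he; rw [he])
      have heb : e ≠ b := fun h => hba2 (by rw [← h]; exact he)
      by_cases hec : e = c
      · -- u c = a : the orbit of a is {a, b, c}
        have huc : u c = a := hec ▸ he
        by_cases hkk : k = 5
        · -- u² is a three-cycle
          have hcs : u.support.card = 5 := by omega
          have hcsupp : c ∈ u.support := hc ▸ apply_mem_support.mpr hbsupp
          have habc : ({a, b, c} : Finset α) ⊆ u.support := by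
            intro x hx; simp at hx; rcases hx with rfl | rfl | rfl <;> assumption
          have hC : (u.support \ ({a, b, c} : Finset α)).card = 2 := by
            rw [Finset.card_sdiff_of_subset habc, aux_card3 hab (Ne.symm hca) (Ne.symm hcb), hcs]
          have hCu : ∀ x ∈ u.support \ ({a, b, c} : Finset α),
              u x ∈ u.support \ ({a, b, c} : Finset α) := by
            intro x hx
            rw [Finset.mem_sdiff] at hx ⊢
            obtain ⟨hxs, hxabc⟩ := hx
            simp only [Finset.mem_insert, Finset.mem_singleton, not_or] at hxabc ⊢
            obtain ⟨hxa, hxb, hxc⟩ := hxabc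
            refine ⟨apply_mem_support.mpr hxs, ?_, ?_, ?_⟩
            · exact fun h => hxc (huinj (h.trans huc.symm))
            · exact fun h => hxa (huinj (h.trans hb.symm))
            · exact fun h => hxb (huinj (h.trans hc.symm))
          have hC2 : ∀ x ∈ u.support \ ({a, b, c} : Finset α), u (u x) = x := by
            intro x hx
            by_contra hne
            have hx1 := hCu x hx
            have hx2 := hCu _ hx1
            have hxs : x ∈ u.support := (Finset.mem_sdiff.mp hx).1
            have h1' : x ≠ u x := fun h => (mem_support.mp hxs) h.symm
            have h2' : u x ≠ u (u x) :=
              fun h => (mem_support.mp (Finset.mem_sdiff.mp hx1).1) h.symm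
            have h3' : x ≠ u (u x) := fun h => hne h.symm
            have hsub : ({x, u x, u (u x)} : Finset α) ⊆
                u.support \ ({a, b, c} : Finset α) := by
              intro y hy; simp at hy
              rcases hy with rfl | rfl | rfl <;> assumption
            have := Finset.card_le_card hsub
            rw [hC, aux_card3 h1' h3' h2'] at this
            omega
          refine ⟨u * u, mul_mem hu hu, ?_⟩
          apply aux_isThreeCycle_of_support_le (a := a) (b := b) (c := c)
          · intro hone
            have : u (u a) = a := by rw [← mul_apply, hone, one_apply]
            rw [hb, hc] at this
            exact hca this
          · rw [map_mul, hs]; decide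
          · intro x hx
            simp only [Finset.mem_insert, Finset.mem_singleton]
            by_contra hxabc
            push_neg at hxabc
            obtain ⟨hxa, hxb, hxc⟩ := hxabc
            have hxmove : u (u x) ≠ x := by
              have := mem_support.mp hx
              rwa [mul_apply] at this
            by_cases hxs : x ∈ u.support
            · exact hxmove (hC2 x (Finset.mem_sdiff.mpr ⟨hxs, by simp [hxa, hxb, hxc]⟩))
            · exact hxmove (by rw [notMem_support.mp hxs, notMem_support.mp hxs])
        · -- k ≥ 6 : recurse
          have hk6 : 6 ≤ k := by omega
          obtain ⟨f, hf⟩ : ∃ f, f ∈ u.support \ ({a, b, c} : Finset α) := by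
            have hcsupp : c ∈ u.support := hc ▸ apply_mem_support.mpr hbsupp
            have habc : ({a, b, c} : Finset α) ⊆ u.support := by
              intro x hx; simp at hx; rcases hx with rfl | rfl | rfl <;> assumption
            have hcd : (u.support \ ({a, b, c} : Finset α)).card =
                u.support.card - ({a, b, c} : Finset α).card := Finset.card_sdiff_of_subset habc
            rw [aux_card3 hab (Ne.symm hca) (Ne.symm hcb), hk] at hcd
            exact Finset.card_pos.mp (by omega)
          rw [Finset.mem_sdiff] at hf
          obtain ⟨hfsupp, hfabc⟩ := hf
          simp only [Finset.mem_insert, Finset.mem_singleton, not_or] at hfabc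
          obtain ⟨hfa, hfb, hfc⟩ := hfabc
          apply step f hfa hfb (by rw [hc]; exact hfc)
          calc ({a, b, f, u b, u f} : Finset α).card ≤ 5 := aux_card_le5 _ _ _ _ _
            _ < k := by omega
      · -- e ∉ {a, b, c} : recurse with small support
        apply step e hea heb (fun h => hec (by rw [hc] at h; exact h))
        rw [he, hc]
        have hsub : ({a, b, e, c, a} : Finset α) ⊆ ({a, b, e, c} : Finset α) := by
          intro x hx; simp at hx ⊢; tauto
        have h4 := aux_card_le4 a b e c
        have := Finset.card_le_card hsub
        omega



set_option linter.unusedSectionVars false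

lemma aux_sign_swap_swap' {α : Type*} [Fintype α] [DecidableEq α] {a b c : α}
    (hab : a ≠ b) (hbc : b ≠ c) :
    Equiv.Perm.sign (swap a b * swap b c) = 1 := by
  rw [map_mul, sign_swap hab, sign_swap hbc]; decide

/-- two noncommuting elements of the alternating group -/
lemma aux_noncomm {n : ℕ} (hn : 5 ≤ n) :
    ∃ a b : Perm (Fin n), a ∈ alternatingGroup (Fin n) ∧ b ∈ alternatingGroup (Fin n) ∧
      a * b ≠ b * a := by
  have h0 : (0 : ℕ) < n := by omega
  have h1 : (1 : ℕ) < n := by omega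
  have h2 : (2 : ℕ) < n := by omega
  have h3 : (3 : ℕ) < n := by omega
  have h4 : (4 : ℕ) < n := by omega
  set i0 : Fin n := ⟨0, h0⟩ with hi0
  set i1 : Fin n := ⟨1, h1⟩ with hi1
  set i2 : Fin n := ⟨2, h2⟩ with hi2
  set i3 : Fin n := ⟨3, h3⟩ with hi3
  set i4 : Fin n := ⟨4, h4⟩ with hi4
  have ne01 : i0 ≠ i1 := by simp [hi0, hi1, Fin.ext_iff]
  have ne12 : i1 ≠ i2 := by simp [hi1, hi2, Fin.ext_iff]
  have ne23 : i2 ≠ i3 := by simp [hi2, hi3, Fin.ext_iff]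
  have ne34 : i3 ≠ i4 := by simp [hi3, hi4, Fin.ext_iff]
  have ne24 : i2 ≠ i4 := by simp [hi2, hi4, Fin.ext_iff]
  have ne13 : i1 ≠ i3 := by simp [hi1, hi3, Fin.ext_iff]
  have ne03 : i0 ≠ i3 := by simp [hi0, hi3, Fin.ext_iff]
  have ne02 : i0 ≠ i2 := by simp [hi0, hi2, Fin.ext_iff]
  have ne04 : i0 ≠ i4 := by simp [hi0, hi4, Fin.ext_iff]
  refine ⟨swap i0 i1 * swap i1 i2, swap i2 i3 * swap i3 i4,
    mem_alternatingGroup.mpr (aux_sign_swap_swap' ne01 ne12),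
    mem_alternatingGroup.mpr (aux_sign_swap_swap' ne23 ne34), fun h => ?_⟩
  have hcg := congrArg (fun f : Perm (Fin n) => f i2) h
  simp only [mul_apply] at hcg
  rw [swap_apply_of_ne_of_ne ne23 ne24] at hcg
  rw [swap_apply_left i2 i3] at hcg
  rw [swap_apply_of_ne_of_ne (Ne.symm ne13) (Ne.symm ne23)] at hcg
  rw [swap_apply_of_ne_of_ne (Ne.symm ne03) (Ne.symm ne13)] at hcg
  rw [swap_apply_right i1 i2] at hcg
  rw [swap_apply_right i0 i1] at hcg
  rw [swap_apply_of_ne_of_ne ne03 ne04] at hcg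
  rw [swap_apply_of_ne_of_ne ne02 ne03] at hcg
  exact ne03 hcg.symm

/-- cyclic rotation of a triple product group -/
def auxCyc (G : Type*) [Group G] : (G × G × G) →* (G × G × G) where
  toFun t := (t.2.1, t.2.2, t.1)
  map_one' := rfl
  map_mul' _ _ := rfl

/-- If `n ≥ 5` and `π₀, π₁ ∈ Sₙ` generate a subgroup containing `Aₙ`, then the
subgroup of `Sₙ × Sₙ × Sₙ` generated by `(π₀,π₁,1)`, `(1,π₀,π₁)` and `(π₁,1,π₀)`
contains `Aₙ × Aₙ × Aₙ`. -/
theorem closure_triples_contains_An_cubed (n : ℕ) (hn : 5 ≤ n)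
    (π₀ π₁ : Equiv.Perm (Fin n))
    (hgen : alternatingGroup (Fin n) ≤ Subgroup.closure {π₀, π₁}) :
    (alternatingGroup (Fin n)).prod
        ((alternatingGroup (Fin n)).prod (alternatingGroup (Fin n))) ≤
      Subgroup.closure ({(π₀, π₁, 1), (1, π₀, π₁), (π₁, 1, π₀)} :
        Set (Equiv.Perm (Fin n) × Equiv.Perm (Fin n) × Equiv.Perm (Fin n))) := by
  classical
  set S : Set (Equiv.Perm (Fin n) × Equiv.Perm (Fin n) × Equiv.Perm (Fin n)) :=
    {(π₀, π₁, 1), (1, π₀, π₁), (π₁, 1, π₀)} with hS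
  set H := Subgroup.closure S with hH
  have hg1 : ((π₀, π₁, 1) : _) ∈ H := Subgroup.subset_closure (by simp [hS])
  have hg2 : ((1, π₀, π₁) : _) ∈ H := Subgroup.subset_closure (by simp [hS])
  have hg3 : ((π₁, 1, π₀) : _) ∈ H := Subgroup.subset_closure (by simp [hS])
  have h5card : 5 ≤ Fintype.card (Fin n) := by simpa using hn
  -- step 1 : π₀ and π₁ do not commute
  have hπ : π₀ * π₁ * π₀⁻¹ * π₁⁻¹ ≠ 1 := by
    intro hcomm
    have hc1 : π₀ * π₁ * π₀⁻¹ = π₁ := mul_inv_eq_one.mp hcomm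
    have hcomm' : π₀ * π₁ = π₁ * π₀ := by
      calc π₀ * π₁ = (π₀ * π₁ * π₀⁻¹) * π₀ := by group
      _ = π₁ * π₀ := by rw [hc1]
    obtain ⟨a, b, haA, hbA, hab⟩ := aux_noncomm hn
    have hcz : Subgroup.closure {π₀, π₁} ≤ Subgroup.centralizer {π₀, π₁} := by
      rw [Subgroup.closure_le]
      intro x hx
      simp only [Set.mem_insert_iff, Set.mem_singleton_iff] at hx
      rw [SetLike.mem_coe, Subgroup.mem_centralizer_iff]
      intro h hh
      simp only [Set.mem_insert_iff, Set.mem_singleton_iff] at hh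
      rcases hx with rfl | rfl <;> rcases hh with rfl | rfl
      · rfl
      · exact hcomm'.symm
      · exact hcomm'
      · rfl
    have hAc : ∀ g ∈ alternatingGroup (Fin n), π₀ * g = g * π₀ ∧ π₁ * g = g * π₁ := by
      intro g hg
      have hmem := hcz (hgen hg)
      rw [Subgroup.mem_centralizer_iff] at hmem
      exact ⟨hmem π₀ (by simp), hmem π₁ (by simp)⟩
    have hcz2 : Subgroup.closure {π₀, π₁} ≤
        Subgroup.centralizer (alternatingGroup (Fin n) : Set (Equiv.Perm (Fin n))) := by
      rw [Subgroup.closure_le]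
      intro x hx
      simp only [Set.mem_insert_iff, Set.mem_singleton_iff] at hx
      rw [SetLike.mem_coe, Subgroup.mem_centralizer_iff]
      intro h hh
      rcases hx with rfl | rfl
      · exact ((hAc h hh).1).symm
      · exact ((hAc h hh).2).symm
    have hmem := hcz2 (hgen haA)
    rw [Subgroup.mem_centralizer_iff] at hmem
    exact hab (hmem b hbA).symm
  -- the "middle slice" subgroup
  set N : Subgroup (Equiv.Perm (Fin n)) :=
    H.comap ((MonoidHom.inr (Equiv.Perm (Fin n)) (Equiv.Perm (Fin n) × Equiv.Perm (Fin n))).comp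
      (MonoidHom.inl (Equiv.Perm (Fin n)) (Equiv.Perm (Fin n)))) with hN
  have hmemN : ∀ x : Equiv.Perm (Fin n), x ∈ N ↔ ((1, x, 1) : _) ∈ H := by
    intro x
    rw [hN, Subgroup.mem_comap]
    rfl
  -- N is normalized by even permutations
  have hNnorm : ∀ g : Equiv.Perm (Fin n), Equiv.Perm.sign g = 1 → ∀ x ∈ N, g * x * g⁻¹ ∈ N := by
    intro g hgs x hx
    have hmapP : Subgroup.closure {π₀, π₁} ≤ H.map
        ((MonoidHom.fst (Equiv.Perm (Fin n)) (Equiv.Perm (Fin n))).comp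
          (MonoidHom.snd (Equiv.Perm (Fin n)) (Equiv.Perm (Fin n) × Equiv.Perm (Fin n)))) := by
      rw [Subgroup.closure_le]
      intro y hy
      simp only [Set.mem_insert_iff, Set.mem_singleton_iff] at hy
      rcases hy with hy | hy
      · exact ⟨(1, π₀, π₁), hg2, hy.symm⟩
      · exact ⟨(π₀, π₁, 1), hg1, hy.symm⟩
    obtain ⟨t, htH, hpt⟩ := hmapP (hgen (Equiv.Perm.mem_alternatingGroup.mpr hgs))
    obtain ⟨t1, t2, t3⟩ := t
    have ht2 : t2 = g := hpt
    rw [hmemN] at hx ⊢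
    have hconj : ((t1, t2, t3) : _) * (1, x, 1) * (t1, t2, t3)⁻¹ = (1, t2 * x * t2⁻¹, 1) := by
      simp [Prod.ext_iff]
    rw [← ht2, ← hconj]
    exact mul_mem (mul_mem htH hx) (inv_mem htH)
  -- N contains the commutator of π₀ and π₁
  have hcN : π₀ * π₁ * π₀⁻¹ * π₁⁻¹ ∈ N := by
    rw [hmemN]
    have hconj : ((1, π₀, π₁) : _) * (π₀, π₁, 1) * (1, π₀, π₁)⁻¹ * (π₀, π₁, 1)⁻¹ =
        ((1, π₀ * π₁ * π₀⁻¹ * π₁⁻¹, 1) : _) := by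
      simp [Prod.ext_iff]
    rw [← hconj]
    exact mul_mem (mul_mem (mul_mem hg2 hg1) (inv_mem hg2)) (inv_mem hg1)
  have hcsign : Equiv.Perm.sign (π₀ * π₁ * π₀⁻¹ * π₁⁻¹) = 1 := by
    rw [map_mul, map_mul, map_mul, map_inv, map_inv]
    rcases Int.units_eq_one_or (Equiv.Perm.sign π₀) with h0 | h0 <;>
      rcases Int.units_eq_one_or (Equiv.Perm.sign π₁) with h1 | h1 <;>
      rw [h0, h1] <;> decide
  -- extract a three-cycle in N
  obtain ⟨τ, hτN, hτ3⟩ := aux_exists_threeCycle h5card N hNnorm _ hcN hπ hcsign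
  -- the alternating group is contained in N
  have hAN : alternatingGroup (Fin n) ≤ N := by
    have hnormal : (N.subgroupOf (alternatingGroup (Fin n))).Normal := by
      constructor
      intro x hx g
      rw [Subgroup.mem_subgroupOf] at hx ⊢
      exact hNnorm (↑g) (Equiv.Perm.mem_alternatingGroup.mp g.2) (↑x) hx
    have hτA : τ ∈ alternatingGroup (Fin n) := hτ3.mem_alternatingGroup
    have hclos := hτ3.alternating_normalClosure (by simpa using hn)
    intro g hg
    have hgin : (⟨g, hg⟩ : alternatingGroup (Fin n)) ∈
        Subgroup.normalClosure {(⟨τ, hτA⟩ : alternatingGroup (Fin n))} := by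
      rw [hclos]; trivial
    have hle : Subgroup.normalClosure {(⟨τ, hτA⟩ : alternatingGroup (Fin n))} ≤
        N.subgroupOf (alternatingGroup (Fin n)) := by
      apply Subgroup.normalClosure_le_normal
      rw [Set.singleton_subset_iff, SetLike.mem_coe, Subgroup.mem_subgroupOf]
      exact hτN
    exact Subgroup.mem_subgroupOf.mp (hle hgin)
  -- cyclic rotation preserves H
  have hcyc : ∀ t, t ∈ H → auxCyc (Equiv.Perm (Fin n)) t ∈ H := by
    have hle : H ≤ H.comap (auxCyc (Equiv.Perm (Fin n))) := by
      rw [hH, Subgroup.closure_le]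
      intro s hs
      simp only [hS, Set.mem_insert_iff, Set.mem_singleton_iff] at hs
      rcases hs with rfl | rfl | rfl
      · exact hg3
      · exact hg1
      · exact hg2
    exact fun t ht => hle ht
  -- conclusion
  intro q hq
  rw [Subgroup.mem_prod] at hq
  obtain ⟨hq1, hq23⟩ := hq
  rw [Subgroup.mem_prod] at hq23
  obtain ⟨hq2, hq3⟩ := hq23
  have m : ∀ x ∈ alternatingGroup (Fin n), ((1, x, 1) : _) ∈ H :=
    fun x hx => (hmemN x).mp (hAN hx)
  have m1 : ((q.1, 1, 1) : _) ∈ H := hcyc _ (m q.1 hq1)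
  have m3 : ((1, 1, q.2.2) : _) ∈ H := hcyc _ (hcyc _ (m q.2.2 hq3))
  have hqeq : q = (q.1, 1, 1) * (1, q.2.1, 1) * (1, 1, q.2.2) := by
    simp [Prod.ext_iff]
  rw [hqeq]
  exact mul_mem (mul_mem m1 (m q.2.1 hq2)) m3
end

section
/- The polynomial F(z) = −(4/531441)·(z−1)·z³·(2z² + 3z + 9)³·(8z⁴ + 28z³ + 126z² + 189z + 378) satisfies: every critical value of F lies in {0,1}. -/
open Polynomial

/-- The polynomial
`F(z) = -(4/531441)·(z-1)·z³·(2z²+3z+9)³·(8z⁴+28z³+126z²+189z+378)`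
has every critical value in `{0,1}`. -/
theorem shabat_sporadic :
    ∀ z : ℂ,
      ((C (-(4 / 531441)) * (X - 1) * X ^ 3 * (C 2 * X ^ 2 + C 3 * X + C 9) ^ 3 *
          (C 8 * X ^ 4 + C 28 * X ^ 3 + C 126 * X ^ 2 + C 189 * X + C 378) :
        Polynomial ℂ)).derivative.eval z = 0 →
      ((C (-(4 / 531441)) * (X - 1) * X ^ 3 * (C 2 * X ^ 2 + C 3 * X + C 9) ^ 3 *
          (C 8 * X ^ 4 + C 28 * X ^ 3 + C 126 * X ^ 2 + C 189 * X + C 378) :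
        Polynomial ℂ)).eval z ∈ ({0, 1} : Set ℂ) := by
  intro z h
  have hE : ((C (-(4 / 531441)) * (X - 1) * X ^ 3 * (C 2 * X ^ 2 + C 3 * X + C 9) ^ 3 *
          (C 8 * X ^ 4 + C 28 * X ^ 3 + C 126 * X ^ 2 + C 189 * X + C 378) :
        Polynomial ℂ)).eval z = (-(4/531441)) * (z - 1) * z^3 * (2*z^2 + 3*z + 9)^3 * (8*z^4 + 28*z^3 + 126*z^2 + 189*z + 378) := by
    simp
  have key : ((-(4/531441)) * (z - 1) * z^3 * (2*z^2 + 3*z + 9)^3 * (8*z^4 + 28*z^3 + 126*z^2 + 189*z + 378)) * (((-(4/531441)) * (z - 1) * z^3 * (2*z^2 + 3*z + 9)^3 * (8*z^4 + 28*z^3 + 126*z^2 + 189*z + 378)) - 1)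
      = ((C (-(4 / 531441)) * (X - 1) * X ^ 3 * (C 2 * X ^ 2 + C 3 * X + C 9) ^ 3 *
          (C 8 * X ^ 4 + C 28 * X ^ 3 + C 126 * X ^ 2 + C 189 * X + C 378) :
        Polynomial ℂ)).derivative.eval z * (((-1 : ℂ)/3) * z^1 + ((1 : ℂ)/18) * z^2 + ((1 : ℂ)/27) * z^3 + ((79 : ℂ)/162) * z^4 + ((296 : ℂ)/1701) * z^5 + ((409 : ℂ)/5103) * z^6 + ((-2354 : ℂ)/15309) * z^7 + ((-6557 : ℂ)/45927) * z^8 + ((-2302 : ℂ)/19683) * z^9 + ((-3260 : ℂ)/59049) * z^10 + ((-4184 : ℂ)/177147) * z^11 + ((-25072 : ℂ)/3720087) * z^12 + ((-2144 : ℂ)/1240029) * z^13 + ((-320 : ℂ)/1240029) * z^14 + ((-128 : ℂ)/3720087) * z^15) := by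
    simp [derivative_mul, derivative_pow]
    ring
  rw [h, zero_mul] at key
  rw [hE]
  rcases mul_eq_zero.mp key with h0 | h1
  · exact Set.mem_insert_iff.mpr (Or.inl h0)
  · exact Set.mem_insert_iff.mpr (Or.inr (by simpa [sub_eq_zero] using h1))
end

section
/- The polynomial f(z) = −(1/729)·(z − 1)·(9 + 3z + 2z²)³ has all its critical values contained in {0,1}, and f(0) = 1 and f(1) = 0, hence β ∘ f with β(z) = 4z(1−z) also has all critical values in {0,1}. -/
open Polynomial

/-- The polynomial `f(z) = -(1/729)·(z-1)·(9+3z+2z²)³` has all critical values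
in `{0,1}`, satisfies `f(0) = 1` and `f(1) = 0`, hence `β ∘ f` with
`β(z) = 4z(1-z)` also has all critical values in `{0,1}`. -/
theorem shabat_f_and_comp :
    (∀ z : ℂ,
      ((C (-(1 / 729)) * (X - 1) * (C 9 + C 3 * X + C 2 * X ^ 2) ^ 3 :
        Polynomial ℂ)).derivative.eval z = 0 →
      ((C (-(1 / 729)) * (X - 1) * (C 9 + C 3 * X + C 2 * X ^ 2) ^ 3 :
        Polynomial ℂ)).eval z ∈ ({0, 1} : Set ℂ)) ∧
    ((C (-(1 / 729)) * (X - 1) * (C 9 + C 3 * X + C 2 * X ^ 2) ^ 3 :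
        Polynomial ℂ)).eval 0 = 1 ∧
    ((C (-(1 / 729)) * (X - 1) * (C 9 + C 3 * X + C 2 * X ^ 2) ^ 3 :
        Polynomial ℂ)).eval 1 = 0 ∧
    (∀ z : ℂ,
      (((C 4 * X * (1 - X) : Polynomial ℂ)).comp
          (C (-(1 / 729)) * (X - 1) * (C 9 + C 3 * X + C 2 * X ^ 2) ^ 3)).derivative.eval z = 0 →
      (((C 4 * X * (1 - X) : Polynomial ℂ)).comp
          (C (-(1 / 729)) * (X - 1) * (C 9 + C 3 * X + C 2 * X ^ 2) ^ 3)).eval z ∈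
        ({0, 1} : Set ℂ)) := by
  set f : Polynomial ℂ := C (-(1 / 729)) * (X - 1) * (C 9 + C 3 * X + C 2 * X ^ 2) ^ 3 with hf
  have heval : ∀ z : ℂ, f.eval z = -(1 / 729) * (z - 1) * (9 + 3 * z + 2 * z ^ 2) ^ 3 := by
    intro z
    simp [hf]
  have hderiv : ∀ z : ℂ, f.derivative.eval z =
      -(14 / 729) * z ^ 2 * (9 + 3 * z + 2 * z ^ 2) ^ 2 := by
    intro z
    simp only [hf, derivative_mul, derivative_pow, derivative_add, derivative_sub,
      derivative_C, derivative_X, derivative_one, eval_add, eval_mul, eval_sub, eval_pow,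
      eval_C, eval_X, eval_one, eval_zero]
    push_cast
    ring
  have hmain : ∀ z : ℂ, f.derivative.eval z = 0 → f.eval z ∈ ({0, 1} : Set ℂ) := by
    intro z hz
    rw [hderiv z] at hz
    rcases mul_eq_zero.1 hz with h | h
    · rcases mul_eq_zero.1 h with h | h
      · norm_num at h
      · have hz0 : z = 0 := by
          exact pow_eq_zero_iff (by norm_num) |>.1 h
        right
        rw [heval, hz0]
        norm_num
    · have hq : (9 + 3 * z + 2 * z ^ 2 : ℂ) = 0 :=
        pow_eq_zero_iff (by norm_num) |>.1 h
      left
      rw [heval, hq]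
      ring
  have h0 : f.eval 0 = 1 := by rw [heval]; norm_num
  have h1 : f.eval 1 = 0 := by rw [heval]; norm_num
  refine ⟨hmain, h0, h1, ?_⟩
  intro z hz
  set g : Polynomial ℂ := C 4 * X * (1 - X) with hg
  have hgeval : ∀ w : ℂ, g.eval w = 4 * w * (1 - w) := by intro w; simp [hg]
  have hgd : ∀ w : ℂ, g.derivative.eval w = 4 - 8 * w := by
    intro w
    simp only [hg, derivative_mul, derivative_sub, derivative_C, derivative_X,
      derivative_one, eval_add, eval_mul, eval_sub, eval_C, eval_X, eval_one, eval_zero]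
    ring
  rw [derivative_comp, eval_mul, eval_comp, hgd] at hz
  rw [eval_comp, hgeval]
  rcases mul_eq_zero.1 hz with h | h
  · rcases hmain z h with hw | hw
    · left; rw [hw]; ring
    · left; rw [hw]; ring
  · have hw : f.eval z = 1 / 2 := by linear_combination -h / 8
    rw [hw]
    right
    norm_num
end
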